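/- Let $K > 0$ and $0 < \alpha < 1$, and define $H(x) = e^{-K x^{1-\alpha}} \int_0^x e^{K s^{1-\alpha}}\, ds$ for $x > 0$. Set $x_0 = \left( \frac{\ln 2}{K} + 1 \right)^{1/(1-\alpha)}$. Then $H(x) \geq \frac{1}{2K(1-\alpha)}$ for all $x \geq x_0$. -/

import Mathlib

theorem stmt_13 (K α : ℝ) (hK : 0 < K) (hα0 : 0 < α) (hα1 : α < 1)
    (H : ℝ → ℝ)
    (hH : ∀ x > (0:ℝ),
      H x = Real.exp (-K * x ^ (1 - α)) * ∫ s in (0:ℝ)..x, Real.exp (K * s ^ (1 - α)))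
    (x₀ : ℝ) (hx₀ : x₀ = (Real.log 2 / K + 1) ^ ((1:ℝ) / (1 - α))) :
    ∀ x ≥ x₀, 1 / (2 * K * (1 - α)) ≤ H x := by
  intro x hx
  have h1α : (0:ℝ) < 1 - α := by linarith
  have hbase : (1:ℝ) ≤ Real.log 2 / K + 1 := by
    have : 0 ≤ Real.log 2 / K := div_nonneg (Real.log_nonneg (by norm_num)) hK.le
    linarith
  have hx₀1 : (1:ℝ) ≤ x₀ := by
    rw [hx₀]
    exact Real.one_le_rpow hbase (by positivity)
  have hx1 : (1:ℝ) ≤ x := le_trans hx₀1 hx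
  have hx0 : (0:ℝ) < x := by linarith
  -- x ^ (1-α) ≥ log 2 / K + 1
  have hxp : Real.log 2 / K + 1 ≤ x ^ (1 - α) := by
    have h := Real.rpow_le_rpow (by positivity : (0:ℝ) ≤ x₀) hx h1α.le
    rw [hx₀, ← Real.rpow_mul (by linarith : (0:ℝ) ≤ Real.log 2 / K + 1),
      one_div_mul_cancel h1α.ne', Real.rpow_one] at h
    exact h
  set f : ℝ → ℝ := fun s => Real.exp (K * s ^ (1 - α)) with hf
  -- monotone hence integrable
  have hmono : MonotoneOn f (Set.Icc 0 x) := by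
    intro a ha b hb hab
    exact Real.exp_le_exp.2 (mul_le_mul_of_nonneg_left
      (Real.rpow_le_rpow ha.1 hab h1α.le) hK.le)
  have hint : IntervalIntegrable f MeasureTheory.volume 0 x := by
    apply MonotoneOn.intervalIntegrable
    rwa [Set.uIcc_of_le hx0.le]
  have hint01 : IntervalIntegrable f MeasureTheory.volume 0 1 := by
    apply hint.mono_set
    rw [Set.uIcc_of_le hx0.le, Set.uIcc_of_le (by norm_num : (0:ℝ) ≤ 1)]
    exact Set.Icc_subset_Icc le_rfl hx1
  have hint1x : IntervalIntegrable f MeasureTheory.volume 1 x := by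
    apply hint.mono_set
    rw [Set.uIcc_of_le hx0.le, Set.uIcc_of_le hx1]
    exact Set.Icc_subset_Icc (by norm_num) le_rfl
  set g : ℝ → ℝ := fun s => Real.exp (K * s ^ (1 - α)) / (K * (1 - α)) with hg
  set g' : ℝ → ℝ := fun s => s ^ (-α) * Real.exp (K * s ^ (1 - α)) with hg'
  have hderiv : ∀ s ∈ Set.uIcc (1:ℝ) x, HasDerivAt g (g' s) s := by
    intro s hs
    rw [Set.uIcc_of_le hx1] at hs
    have hs0 : (0:ℝ) < s := lt_of_lt_of_le one_pos hs.1
    have h1 : HasDerivAt (fun s : ℝ => s ^ (1 - α)) ((1 - α) * s ^ (1 - α - 1)) s :=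
      Real.hasDerivAt_rpow_const (Or.inl hs0.ne')
    have h2 := ((h1.const_mul K).exp).div_const (K * (1 - α))
    refine h2.congr_deriv ?_
    have : 1 - α - 1 = -α := by ring
    rw [this]
    field_simp [hg']
    ring
  have hcont : ContinuousOn g' (Set.uIcc (1:ℝ) x) := by
    rw [Set.uIcc_of_le hx1]
    have hne : ∀ s ∈ Set.Icc (1:ℝ) x, s ≠ 0 := fun s hs =>
      (lt_of_lt_of_le one_pos hs.1).ne'
    apply ContinuousOn.mul
    · exact fun s hs => (Real.continuousAt_rpow_const s (-α) (Or.inl (hne s hs))).continuousWithinAt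
    · apply Real.continuous_exp.comp_continuousOn
      apply ContinuousOn.mul continuousOn_const
      exact fun s hs => (Real.continuousAt_rpow_const s (1-α) (Or.inl (hne s hs))).continuousWithinAt
  have hintg' : IntervalIntegrable g' MeasureTheory.volume 1 x :=
    hcont.intervalIntegrable
  have hftc : ∫ s in (1:ℝ)..x, g' s = g x - g 1 :=
    intervalIntegral.integral_eq_sub_of_hasDerivAt hderiv hintg'
  -- compare g' ≤ f on [1,x]
  have hcmp : ∫ s in (1:ℝ)..x, g' s ≤ ∫ s in (1:ℝ)..x, f s := by
    apply intervalIntegral.integral_mono_on hx1 hintg' hint1x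
    intro s hs
    have hs1 : (1:ℝ) ≤ s := hs.1
    have : s ^ (-α) ≤ 1 :=
      Real.rpow_le_one_of_one_le_of_nonpos hs1 (by linarith)
    calc g' s = s ^ (-α) * Real.exp (K * s ^ (1 - α)) := rfl
      _ ≤ 1 * Real.exp (K * s ^ (1 - α)) :=
          mul_le_mul_of_nonneg_right this (Real.exp_nonneg _)
      _ = f s := by rw [one_mul]
  have hsplit : (∫ s in (0:ℝ)..1, f s) + ∫ s in (1:ℝ)..x, f s = ∫ s in (0:ℝ)..x, f s :=
    intervalIntegral.integral_add_adjacent_intervals hint01 hint1x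
  have h01 : 0 ≤ ∫ s in (0:ℝ)..1, f s :=
    intervalIntegral.integral_nonneg (by norm_num) (fun s _ => (Real.exp_pos _).le)
  have hIlb : g x - g 1 ≤ ∫ s in (0:ℝ)..x, f s := by
    rw [← hsplit, ← hftc]
    linarith [hcmp]
  rw [hH x hx0]
  have hgx : g x = Real.exp (K * x ^ (1 - α)) / (K * (1 - α)) := rfl
  have hg1 : g 1 = Real.exp K / (K * (1 - α)) := by
    simp [hg, Real.one_rpow]
  have hE : (0:ℝ) < Real.exp (-K * x ^ (1 - α)) := Real.exp_pos _
  have hKα : (0:ℝ) < K * (1 - α) := by positivity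
  have key : 1 / (2 * K * (1 - α)) ≤ Real.exp (-K * x ^ (1 - α)) * (g x - g 1) := by
    rw [hgx, hg1]
    have hexp : Real.exp (-K * x ^ (1 - α)) * Real.exp K ≤ 1 / 2 := by
      rw [← Real.exp_add]
      have harg : -K * x ^ (1 - α) + K ≤ -Real.log 2 := by
        have h2 : Real.log 2 ≤ K * (x ^ (1 - α) - 1) := by
          have := mul_le_mul_of_nonneg_left hxp hK.le
          rw [mul_add, mul_one, mul_div_cancel₀ _ hK.ne'] at this
          nlinarith
        nlinarith
      calc Real.exp (-K * x ^ (1 - α) + K) ≤ Real.exp (-Real.log 2) :=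
            Real.exp_le_exp.2 harg
        _ = 1 / 2 := by
            rw [Real.exp_neg, Real.exp_log (by norm_num : (0:ℝ) < 2)]; norm_num
    have hid : Real.exp (-K * x ^ (1 - α)) * Real.exp (K * x ^ (1 - α)) = 1 := by
      rw [← Real.exp_add]; simp
    have expand : Real.exp (-K * x ^ (1 - α)) *
        (Real.exp (K * x ^ (1 - α)) / (K * (1 - α)) - Real.exp K / (K * (1 - α)))
        = (1 - Real.exp (-K * x ^ (1 - α)) * Real.exp K) / (K * (1 - α)) := by
      have hid' := hid
      rw [neg_mul] at hid'
      field_simp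
      linear_combination hid'
    rw [expand]
    rw [div_le_div_iff₀ (by positivity) hKα]
    nlinarith
  calc 1 / (2 * K * (1 - α)) ≤ Real.exp (-K * x ^ (1 - α)) * (g x - g 1) := key
    _ ≤ _ := mul_le_mul_of_nonneg_left hIlb hE.le
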